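/- arXiv:2511.23035 — 4 statements merged into one kernel-verified Lean document; each statement's English description precedes it below -/
import Mathlib

section
/- Let T = ℂ[X, Y_1, ..., Y_n] act by differentiation on S = ℂ[x, y_1, ..., y_n], and let F = x^2(y_1^2 + ... + y_n^2) with n ≥ 2. Then the annihilator ideal F^⊥ = {g ∈ T : g ∘ F = 0} equals the ideal (X^3, {Y_1^2 − Y_i^2 : 2 ≤ i ≤ n}, {Y_iY_j : 1 ≤ i < j ≤ n}). -/
open MvPolynomial
open scoped Classical

/-- Differentiation of `F` by the monomial with exponent vector `m`:
`∂^m F`, defined coefficientwise via descending factorials. -/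
noncomputable def contract {σ : Type*} (m : σ →₀ ℕ) (F : MvPolynomial σ ℂ) : MvPolynomial σ ℂ :=
  ∑ k ∈ F.support, monomial (k - m) (F.coeff k * m.prod fun i e => (Nat.descFactorial (k i) e : ℂ))

/-- The apolarity (differentiation) action: `apolar g F = g ∘ F`. -/
noncomputable def apolar {σ : Type*} (g F : MvPolynomial σ ℂ) : MvPolynomial σ ℂ :=
  ∑ m ∈ g.support, g.coeff m • contract m F

theorem coeff_contract {σ : Type*} (m : σ →₀ ℕ) (F : MvPolynomial σ ℂ) (k : σ →₀ ℕ) :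
    (contract m F).coeff k =
      F.coeff (k + m) * m.prod fun i e => (Nat.descFactorial ((k + m) i) e : ℂ) := by
  classical
  rw [contract, MvPolynomial.coeff_sum]
  simp only [coeff_monomial]
  rw [Finset.sum_eq_single (k + m)]
  · by_cases h : (k + m) ∈ F.support
    · simp [add_tsub_cancel_right]
    · simp only [MvPolynomial.notMem_support_iff] at h
      simp [h]
  · intro j hj hne
    split_ifs with h
    · obtain ⟨i, hi⟩ : ∃ i, j i < m i := by
        by_contra hc
        push_neg at hc
        exact hne (by rw [← h, tsub_add_cancel_of_le (Finsupp.le_def.2 hc)])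
      have him : i ∈ m.support := Finsupp.mem_support_iff.2 (by omega)
      rw [Finsupp.prod, Finset.prod_eq_zero him (by
        norm_cast
        simp [Nat.descFactorial_eq_zero_iff_lt.2 hi]), mul_zero]
    · rfl
  · intro h
    simp only [MvPolynomial.notMem_support_iff] at h
    simp [h]

theorem contract_zero {σ : Type*} (m : σ →₀ ℕ) : contract m (0 : MvPolynomial σ ℂ) = 0 := by
  ext k; simp [coeff_contract]

theorem contract_add {σ : Type*} (m : σ →₀ ℕ) (F G : MvPolynomial σ ℂ) :
    contract m (F + G) = contract m F + contract m G := by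
  ext k; simp [coeff_contract, coeff_add, add_mul]

theorem contract_smul {σ : Type*} (m : σ →₀ ℕ) (c : ℂ) (F : MvPolynomial σ ℂ) :
    contract m (c • F) = c • contract m F := by
  ext k; simp [coeff_contract, mul_assoc]

theorem contract_contract {σ : Type*} (m m' : σ →₀ ℕ) (F : MvPolynomial σ ℂ) :
    contract m (contract m' F) = contract (m + m') F := by
  classical
  ext k
  rw [coeff_contract, coeff_contract, coeff_contract]
  rw [add_assoc, mul_assoc]
  congr 1
  have h1 : ∀ (μ : σ →₀ ℕ) (f : σ → ℕ → ℂ), (∀ i, f i 0 = 1) →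
      μ.support ⊆ m.support ∪ m'.support →
      μ.prod f = ∏ i ∈ m.support ∪ m'.support, f i (μ i) := by
    intro μ f hf hs
    exact Finsupp.prod_of_support_subset μ hs f (fun i _ => hf i)
  rw [h1 m' _ (by simp) (Finset.subset_union_right),
      h1 m _ (by intro i; simp) (Finset.subset_union_left),
      h1 (m + m') _ (by simp) (Finsupp.support_add), ← Finset.prod_mul_distrib]
  apply Finset.prod_congr rfl
  intro i _
  simp only [Finsupp.add_apply]
  norm_cast
  rw [mul_comm]
  have := Nat.descFactorial_mul_descFactorial (n := k i + (m i + m' i)) (k := m' i)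
    (m := m i + m' i) (Nat.le_add_left _ _)
  simpa [show k i + (m i + m' i) - m' i = k i + m i by omega,
    show m i + m' i - m' i = m i by omega] using this


theorem apolar_eq_sum_of_subset {σ : Type*} (g F : MvPolynomial σ ℂ) (s : Finset (σ →₀ ℕ))
    (hs : g.support ⊆ s) : apolar g F = ∑ m ∈ s, g.coeff m • contract m F := by
  rw [apolar]
  exact Finset.sum_subset hs (fun m _ hm => by
    rw [MvPolynomial.notMem_support_iff.1 hm, zero_smul])

theorem apolar_add_left {σ : Type*} (g h F : MvPolynomial σ ℂ) :
    apolar (g + h) F = apolar g F + apolar h F := by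
  classical
  rw [apolar_eq_sum_of_subset (g + h) F (g.support ∪ h.support)
      (MvPolynomial.support_add ..),
    apolar_eq_sum_of_subset g F (g.support ∪ h.support) Finset.subset_union_left,
    apolar_eq_sum_of_subset h F (g.support ∪ h.support) Finset.subset_union_right,
    ← Finset.sum_add_distrib]
  exact Finset.sum_congr rfl (fun m _ => by rw [coeff_add, add_smul])

theorem apolar_smul_left {σ : Type*} (c : ℂ) (g F : MvPolynomial σ ℂ) :
    apolar (c • g) F = c • apolar g F := by
  classical
  rw [apolar_eq_sum_of_subset (c • g) F g.support (MvPolynomial.support_smul),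
    apolar, Finset.smul_sum]
  exact Finset.sum_congr rfl (fun m _ => by
    rw [MvPolynomial.coeff_smul, smul_eq_mul, mul_smul])

theorem apolar_zero_left {σ : Type*} (F : MvPolynomial σ ℂ) : apolar 0 F = 0 := by
  simp [apolar]

theorem apolar_zero_right {σ : Type*} (g : MvPolynomial σ ℂ) : apolar g 0 = 0 := by
  simp [apolar, contract_zero]

theorem apolar_sub_left {σ : Type*} (g h F : MvPolynomial σ ℂ) :
    apolar (g - h) F = apolar g F - apolar h F := by
  have := apolar_add_left (g - h) h F
  rw [sub_add_cancel] at this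
  rw [this]; ring

theorem apolar_monomial {σ : Type*} (m : σ →₀ ℕ) (c : ℂ) (F : MvPolynomial σ ℂ) :
    apolar (monomial m c) F = c • contract m F := by
  classical
  rw [apolar_eq_sum_of_subset _ F {m} MvPolynomial.support_monomial_subset,
    Finset.sum_singleton, MvPolynomial.coeff_monomial, if_pos rfl]

theorem apolar_mul {σ : Type*} (g h F : MvPolynomial σ ℂ) :
    apolar (g * h) F = apolar g (apolar h F) := by
  classical
  induction g using MvPolynomial.induction_on' with
  | add p q hp hq => rw [add_mul, apolar_add_left, apolar_add_left, hp, hq]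
  | monomial m c =>
    induction h using MvPolynomial.induction_on' with
    | add p q hp hq =>
      rw [mul_add, apolar_add_left, hp, hq, apolar_add_left, apolar_monomial, apolar_monomial,
        apolar_monomial, contract_add, smul_add]
    | monomial m' c' =>
      rw [MvPolynomial.monomial_mul, apolar_monomial, apolar_monomial, apolar_monomial,
        contract_smul, ← contract_contract, mul_comm c c', mul_smul]
      rw [smul_comm]

theorem prod_desc_eq_zero {σ : Type*} {m t : σ →₀ ℕ} (h : ∃ i, t i < m i) :
    (m.prod fun i e => (Nat.descFactorial (t i) e : ℂ)) = 0 := by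
  classical
  obtain ⟨i, hi⟩ := h
  have him : i ∈ m.support := Finsupp.mem_support_iff.2 (by omega)
  rw [Finsupp.prod, Finset.prod_eq_zero him]
  norm_cast
  simp [Nat.descFactorial_eq_zero_iff_lt.2 hi]

theorem contract_monomial {σ : Type*} (m t : σ →₀ ℕ) (c : ℂ) :
    contract m (monomial t c) =
      monomial (t - m) (c * m.prod fun i e => (Nat.descFactorial (t i) e : ℂ)) := by
  classical
  ext k
  rw [coeff_contract, MvPolynomial.coeff_monomial, MvPolynomial.coeff_monomial]
  by_cases h : t = k + m
  · subst h
    rw [if_pos rfl, if_pos (add_tsub_cancel_right k m)]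
  · rw [if_neg h, zero_mul]
    by_cases h2 : t - m = k
    · rw [if_pos h2]
      rw [prod_desc_eq_zero, mul_zero]
      by_contra hc
      push_neg at hc
      exact h (by rw [← h2, tsub_add_cancel_of_le (Finsupp.le_def.2 hc)])
    · rw [if_neg h2]

theorem contract_sum {σ ι : Type*} (m : σ →₀ ℕ) (s : Finset ι) (f : ι → MvPolynomial σ ℂ) :
    contract m (∑ j ∈ s, f j) = ∑ j ∈ s, contract m (f j) := by
  ext k
  simp [coeff_contract, MvPolynomial.coeff_sum, Finset.sum_mul]

noncomputable def Fp (n : ℕ) : MvPolynomial (Unit ⊕ Fin n) ℂ :=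
  (X (Sum.inl ())) ^ 2 * ∑ j, (X (Sum.inr j)) ^ 2

noncomputable def me {n : ℕ} (j : Fin n) : (Unit ⊕ Fin n) →₀ ℕ :=
  Finsupp.single (Sum.inl ()) 2 + Finsupp.single (Sum.inr j) 2

theorem Fp_eq (n : ℕ) : Fp n = ∑ j, monomial (me j) 1 := by
  unfold Fp me
  rw [Finset.mul_sum]
  refine Finset.sum_congr rfl fun j _ => ?_
  rw [X_pow_eq_monomial, X_pow_eq_monomial, monomial_mul, one_mul]

theorem contract_Fp {n : ℕ} (m : (Unit ⊕ Fin n) →₀ ℕ) :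
    contract m (Fp n) =
      ∑ j, monomial (me j - m) (m.prod fun i e => (Nat.descFactorial (me j i) e : ℂ)) := by
  rw [Fp_eq, contract_sum]
  refine Finset.sum_congr rfl fun j _ => ?_
  rw [contract_monomial, one_mul]

theorem me_apply_inl {n : ℕ} (j : Fin n) (u : Unit) : me j (Sum.inl u) = 2 := by
  simp [me, Finsupp.single_apply]

theorem me_apply_inr {n : ℕ} (j i : Fin n) : me j (Sum.inr i) = if j = i then 2 else 0 := by
  simp [me, Finsupp.single_apply, Sum.inr.injEq]

theorem apolar_X3 (n : ℕ) : apolar ((X (Sum.inl ())) ^ 3) (Fp n) = 0 := by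
  rw [X_pow_eq_monomial, apolar_monomial, contract_Fp, one_smul]
  refine Finset.sum_eq_zero fun j _ => ?_
  rw [Finsupp.prod_single_index (by simp)]
  rw [me_apply_inl]
  norm_num

theorem apolar_Ysq {n : ℕ} (i : Fin n) :
    apolar ((X (Sum.inr i)) ^ 2) (Fp n) = monomial (Finsupp.single (Sum.inl ()) 2) 2 := by
  rw [X_pow_eq_monomial, apolar_monomial, contract_Fp, one_smul]
  rw [Finset.sum_eq_single_of_mem i (Finset.mem_univ i)]
  · rw [Finsupp.prod_single_index (by simp), me_apply_inr, if_pos rfl, me,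
      add_tsub_cancel_right]
    norm_num
  · intro j _ hji
    rw [Finsupp.prod_single_index (by simp), me_apply_inr, if_neg hji]
    norm_num

theorem apolar_YY {n : ℕ} (i j : Fin n) (hij : i ≠ j) :
    apolar ((X (Sum.inr i)) * (X (Sum.inr j))) (Fp n) = 0 := by
  classical
  rw [X, X, monomial_mul, apolar_monomial, contract_Fp, mul_one, one_smul]
  refine Finset.sum_eq_zero fun l _ => ?_
  rw [Finsupp.prod_add_index_of_disjoint (by
    simp [Finsupp.support_single_ne_zero _ (one_ne_zero), Finset.disjoint_singleton,
      Sum.inr.injEq, Ne.symm hij, hij])]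
  rw [Finsupp.prod_single_index (by simp), Finsupp.prod_single_index (by simp),
    me_apply_inr, me_apply_inr]
  by_cases hli : l = i
  · subst hli; rw [if_pos rfl, if_neg hij]; simp
  · rw [if_neg hli]; simp

section Main

variable {n : ℕ}

def gens (n : ℕ) (h : 2 ≤ n) : Set (MvPolynomial (Unit ⊕ Fin n) ℂ) :=
  ({(X (Sum.inl ()) : MvPolynomial (Unit ⊕ Fin n) ℂ) ^ 3} ∪
     {p | ∃ i : Fin n, i ≠ ⟨0, Nat.lt_of_lt_of_le (by norm_num) h⟩ ∧
        p = X (Sum.inr (⟨0, Nat.lt_of_lt_of_le (by norm_num) h⟩ : Fin n)) ^ 2 - X (Sum.inr i) ^ 2} ∪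
     {p | ∃ i j : Fin n, i < j ∧ p = X (Sum.inr i) * X (Sum.inr j)})

theorem gen1_mem (h : 2 ≤ n) : (X (Sum.inl ()) : MvPolynomial (Unit ⊕ Fin n) ℂ) ^ 3 ∈ gens n h := by
  left; left; rfl

theorem gen2_mem (h : 2 ≤ n) (i : Fin n) (hi : i ≠ ⟨0, Nat.lt_of_lt_of_le (by norm_num) h⟩) :
    (X (Sum.inr (⟨0, Nat.lt_of_lt_of_le (by norm_num) h⟩ : Fin n)) ^ 2 - X (Sum.inr i) ^ 2 : MvPolynomial (Unit ⊕ Fin n) ℂ)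
      ∈ gens n h := by
  left; right; exact ⟨i, hi, rfl⟩

theorem gen3_mem (h : 2 ≤ n) (i j : Fin n) (hij : i < j) :
    (X (Sum.inr i) * X (Sum.inr j) : MvPolynomial (Unit ⊕ Fin n) ℂ) ∈ gens n h := by
  right; exact ⟨i, j, hij, rfl⟩

/-- The easy inclusion: the ideal annihilates `F`. -/
theorem apolar_eq_zero_of_mem (h : 2 ≤ n) (g : MvPolynomial (Unit ⊕ Fin n) ℂ)
    (hg : g ∈ Ideal.span (gens n h)) : apolar g (Fp n) = 0 := by
  classical
  let A : Ideal (MvPolynomial (Unit ⊕ Fin n) ℂ) :=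
    { carrier := {g | apolar g (Fp n) = 0}
      add_mem' := fun ha hb => by
        simp only [Set.mem_setOf_eq] at *
        rw [apolar_add_left, ha, hb, add_zero]
      zero_mem' := apolar_zero_left _
      smul_mem' := fun c g hg => by
        simp only [Set.mem_setOf_eq] at *
        rw [smul_eq_mul, apolar_mul, hg, apolar_zero_right] }
  have hle : Ideal.span (gens n h) ≤ A := by
    rw [Ideal.span_le]
    rintro p (⟨hp | hp⟩ | hp)
    · rw [Set.mem_singleton_iff] at hp
      subst hp
      exact apolar_X3 n
    · obtain ⟨i, hi, rfl⟩ := hp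
      show apolar _ _ = 0
      rw [apolar_sub_left, apolar_Ysq, apolar_Ysq, sub_self]
    · obtain ⟨i, j, hij, rfl⟩ := hp
      exact apolar_YY i j (ne_of_lt hij)
  exact hle hg

theorem Ycube_mem (h : 2 ≤ n) (i : Fin n) :
    (X (Sum.inr i) : MvPolynomial (Unit ⊕ Fin n) ℂ) ^ 3 ∈ Ideal.span (gens n h) := by
  by_cases hi : i = (⟨0, by omega⟩ : Fin n)
  · subst hi
    have h1 : (⟨1, by omega⟩ : Fin n) ≠ ⟨0, by omega⟩ := by
      intro hc; exact absurd (congrArg Fin.val hc) (by norm_num)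
    have e : (X (Sum.inr (⟨0, by omega⟩ : Fin n)) : MvPolynomial (Unit ⊕ Fin n) ℂ) ^ 3 =
        X (Sum.inr (⟨0, by omega⟩ : Fin n)) *
          (X (Sum.inr (⟨0, by omega⟩ : Fin n)) ^ 2 - X (Sum.inr (⟨1, by omega⟩ : Fin n)) ^ 2) +
        (X (Sum.inr (⟨0, by omega⟩ : Fin n)) * X (Sum.inr (⟨1, by omega⟩ : Fin n))) *
          X (Sum.inr (⟨1, by omega⟩ : Fin n)) := by ring
    rw [e]
    refine Ideal.add_mem _ (Ideal.mul_mem_left _ _ (Ideal.subset_span (gen2_mem h _ h1)))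
      (Ideal.mul_mem_right _ _ (Ideal.subset_span (gen3_mem h _ _ ?_)))
    exact Fin.mk_lt_mk.2 (by norm_num)
  · have hlt : (⟨0, by omega⟩ : Fin n) < i := by
      rcases Fin.lt_or_lt_of_ne (Ne.symm hi) with hc | hc
      · exact hc
      · exact absurd hc (by simp [Fin.lt_def])
    have e : (X (Sum.inr i) : MvPolynomial (Unit ⊕ Fin n) ℂ) ^ 3 =
        (-X (Sum.inr i)) * (X (Sum.inr (⟨0, by omega⟩ : Fin n)) ^ 2 - X (Sum.inr i) ^ 2) +
        (X (Sum.inr (⟨0, by omega⟩ : Fin n)) * X (Sum.inr i)) *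
          X (Sum.inr (⟨0, by omega⟩ : Fin n)) := by ring
    rw [e]
    exact Ideal.add_mem _ (Ideal.mul_mem_left _ _ (Ideal.subset_span (gen2_mem h _ hi)))
      (Ideal.mul_mem_right _ _ (Ideal.subset_span (gen3_mem h _ _ hlt)))

noncomputable def mv (n : ℕ) (h : 2 ≤ n) : Fin 3 × Option (Option (Fin n)) → ((Unit ⊕ Fin n) →₀ ℕ)
  | (a, none) => Finsupp.single (Sum.inl ()) (a : ℕ)
  | (a, some none) =>
      Finsupp.single (Sum.inl ()) (a : ℕ) + Finsupp.single (Sum.inr ⟨0, Nat.lt_of_lt_of_le (by norm_num) h⟩) 2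
  | (a, some (some i)) => Finsupp.single (Sum.inl ()) (a : ℕ) + Finsupp.single (Sum.inr i) 1

noncomputable def bv (n : ℕ) (h : 2 ≤ n) (p : Fin 3 × Option (Option (Fin n))) :
    MvPolynomial (Unit ⊕ Fin n) ℂ := monomial (mv n h p) 1

theorem monomial_eq_mul_of_le {σ : Type*} {e m : σ →₀ ℕ} (hle : e ≤ m) (c : ℂ) :
    (monomial m c : MvPolynomial σ ℂ) = monomial e 1 * monomial (m - e) c := by
  rw [monomial_mul, one_mul, add_tsub_cancel_of_le hle]

theorem reduce (h : 2 ≤ n) (g : MvPolynomial (Unit ⊕ Fin n) ℂ) :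
    ∃ r ∈ Submodule.span ℂ (Set.range (bv n h)), g - r ∈ Ideal.span (gens n h) := by
  classical
  induction g using MvPolynomial.induction_on' with
  | add p q hp hq =>
    obtain ⟨r1, hr1, hd1⟩ := hp
    obtain ⟨r2, hr2, hd2⟩ := hq
    exact ⟨r1 + r2, Submodule.add_mem _ hr1 hr2, by
      have : p + q - (r1 + r2) = (p - r1) + (q - r2) := by ring
      rw [this]; exact Ideal.add_mem _ hd1 hd2⟩
  | monomial m c =>
    by_cases ha : 3 ≤ m (Sum.inl ())
    · refine ⟨0, Submodule.zero_mem _, ?_⟩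
      rw [sub_zero, monomial_eq_mul_of_le (Finsupp.single_le_iff.2 ha) c, ← X_pow_eq_monomial]
      exact Ideal.mul_mem_right _ _ (Ideal.subset_span (gen1_mem h))
    · push_neg at ha
      by_cases htwo : ∃ i j : Fin n, i < j ∧ 0 < m (Sum.inr i) ∧ 0 < m (Sum.inr j)
      · obtain ⟨i, j, hij, hi, hj⟩ := htwo
        refine ⟨0, Submodule.zero_mem _, ?_⟩
        have hle : Finsupp.single (Sum.inr i) 1 + Finsupp.single (Sum.inr j) 1 ≤ m := by
          rw [Finsupp.le_def]
          intro t
          rcases t with u | l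
          · simp [Finsupp.single_apply]
          · simp only [Finsupp.add_apply, Finsupp.single_apply]
            by_cases hli : Sum.inr i = (Sum.inr l : Unit ⊕ Fin n)
            · obtain rfl : i = l := by injection hli
              rw [if_pos rfl, if_neg (by simp [Ne.symm (ne_of_lt hij)])]
              omega
            · rw [if_neg hli]
              by_cases hlj : Sum.inr j = (Sum.inr l : Unit ⊕ Fin n)
              · obtain rfl : j = l := by injection hlj
                rw [if_pos rfl]; omega
              · rw [if_neg hlj]; omega
        rw [sub_zero, monomial_eq_mul_of_le hle c]
        have hXX : (monomial (Finsupp.single (Sum.inr i) 1 + Finsupp.single (Sum.inr j) 1) 1 :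
            MvPolynomial (Unit ⊕ Fin n) ℂ) = X (Sum.inr i) * X (Sum.inr j) := by
          rw [X, X, monomial_mul, mul_one]
        rw [hXX]
        exact Ideal.mul_mem_right _ _ (Ideal.subset_span (gen3_mem h i j hij))
      · push_neg at htwo
        by_cases hall : ∀ i : Fin n, m (Sum.inr i) = 0
        · have hm : m = Finsupp.single (Sum.inl ()) (m (Sum.inl ())) := by
            ext t
            rcases t with u | i
            · cases u; simp [Finsupp.single_apply]
            · simp [Finsupp.single_apply, hall i]
          refine ⟨c • bv n h (⟨m (Sum.inl ()), by omega⟩, none),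
            Submodule.smul_mem _ _ (Submodule.subset_span ⟨_, rfl⟩), ?_⟩
          have : monomial m c = c • bv n h (⟨m (Sum.inl ()), by omega⟩, none) := by
            rw [bv, mv, smul_monomial, smul_eq_mul, mul_one]
            simp only [Fin.val_mk]
            rw [← hm]
          rw [this, sub_self]
          exact Ideal.zero_mem _
        · push_neg at hall
          obtain ⟨i, hi⟩ := hall
          have huniq : ∀ j, j ≠ i → m (Sum.inr j) = 0 := by
            intro j hj
            rcases lt_or_gt_of_ne hj with hlt | hgt
            · by_contra hc
              exact absurd (htwo j i hlt (by omega)) (by omega)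
            · by_contra hc
              exact absurd (htwo i j hgt (by omega)) (by omega)
          have hm : m = Finsupp.single (Sum.inl ()) (m (Sum.inl ())) +
              Finsupp.single (Sum.inr i) (m (Sum.inr i)) := by
            ext t
            rcases t with u | l
            · cases u; simp [Finsupp.single_apply]
            · simp only [Finsupp.add_apply, Finsupp.single_apply]
              by_cases hli : l = i
              · subst hli; simp
              · simp [Sum.inr.injEq, Ne.symm hli, huniq l hli]
          by_cases hb3 : 3 ≤ m (Sum.inr i)
          · refine ⟨0, Submodule.zero_mem _, ?_⟩
            rw [sub_zero, monomial_eq_mul_of_le (Finsupp.single_le_iff.2 hb3) c,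
              ← X_pow_eq_monomial]
            exact Ideal.mul_mem_right _ _ (Ycube_mem h i)
          · have hb1 : m (Sum.inr i) = 1 ∨ m (Sum.inr i) = 2 := by omega
            rcases hb1 with hb | hb
            · refine ⟨c • bv n h (⟨m (Sum.inl ()), by omega⟩, some (some i)),
                Submodule.smul_mem _ _ (Submodule.subset_span ⟨_, rfl⟩), ?_⟩
              have : monomial m c = c • bv n h (⟨m (Sum.inl ()), by omega⟩, some (some i)) := by
                rw [bv, mv, smul_monomial, smul_eq_mul, mul_one]
                simp only [Fin.val_mk]
                rw [← hb, ← hm]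
              rw [this, sub_self]
              exact Ideal.zero_mem _
            · by_cases hi0 : i = (⟨0, by omega⟩ : Fin n)
              · refine ⟨c • bv n h (⟨m (Sum.inl ()), by omega⟩, some none),
                  Submodule.smul_mem _ _ (Submodule.subset_span ⟨_, rfl⟩), ?_⟩
                have : monomial m c = c • bv n h (⟨m (Sum.inl ()), by omega⟩, some none) := by
                  rw [bv, mv, smul_monomial, smul_eq_mul, mul_one]
                  simp only [Fin.val_mk]
                  rw [← hi0, ← hb, ← hm]
                rw [this, sub_self]
                exact Ideal.zero_mem _
              · refine ⟨c • bv n h (⟨m (Sum.inl ()), by omega⟩, some none),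
                  Submodule.smul_mem _ _ (Submodule.subset_span ⟨_, rfl⟩), ?_⟩
                have hm3 : m = Finsupp.single (Sum.inl ()) (m (Sum.inl ())) +
                    Finsupp.single (Sum.inr i) 2 := by rw [← hb]; exact hm
                have key : monomial m c - c • bv n h (⟨m (Sum.inl ()), by omega⟩, some none) =
                    monomial (Finsupp.single (Sum.inl ()) (m (Sum.inl ()))) (-c) *
                      (X (Sum.inr (⟨0, by omega⟩ : Fin n)) ^ 2 - X (Sum.inr i) ^ 2) := by
                  rw [bv, mv, smul_monomial, smul_eq_mul, mul_one]
                  simp only [Fin.val_mk]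
                  rw [mul_sub, X_pow_eq_monomial, X_pow_eq_monomial, monomial_mul, monomial_mul]
                  simp only [mul_one, map_neg]
                  rw [← hm3]
                  abel
                rw [key]
                exact Ideal.mul_mem_left _ _ (Ideal.subset_span (gen2_mem h i hi0))

noncomputable def tv (n : ℕ) (h : 2 ≤ n) : Fin 3 × Option (Option (Fin n)) → ((Unit ⊕ Fin n) →₀ ℕ)
  | (a, none) =>
      Finsupp.single (Sum.inl ()) (2 - (a : ℕ)) + Finsupp.single (Sum.inr ⟨1, by omega⟩) 2
  | (a, some none) => Finsupp.single (Sum.inl ()) (2 - (a : ℕ))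
  | (a, some (some i)) => Finsupp.single (Sum.inl ()) (2 - (a : ℕ)) + Finsupp.single (Sum.inr i) 1

noncomputable def dval (n : ℕ) : Fin 3 × Option (Option (Fin n)) → ℂ
  | (a, none) => (Nat.descFactorial 2 (a : ℕ) : ℂ)
  | (_a, some none) => 2 * (Nat.descFactorial 2 ((_a : Fin 3) : ℕ) : ℂ)
  | (_a, some (some _)) => 2 * (Nat.descFactorial 2 ((_a : Fin 3) : ℕ) : ℂ)

theorem dval_ne_zero (n : ℕ) (p : Fin 3 × Option (Option (Fin n))) : dval n p ≠ 0 := by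
  rcases p with ⟨a, o⟩
  have ha := a.isLt
  rcases o with _ | _ | i <;> simp [dval, Nat.descFactorial_eq_zero_iff_lt] <;> omega

theorem coeff_Fp_ne {n : ℕ} (e : (Unit ⊕ Fin n) →₀ ℕ) (he : ∀ j, me j ≠ e) :
    MvPolynomial.coeff e (Fp n) = 0 := by
  rw [Fp_eq, MvPolynomial.coeff_sum]
  exact Finset.sum_eq_zero fun j _ => by rw [coeff_monomial, if_neg (he j)]

theorem me_inj {n : ℕ} {j j' : Fin n} (hjj : me j = me j') : j = j' := by
  by_contra hne
  have := DFunLike.congr_fun hjj (Sum.inr j)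
  rw [me_apply_inr, me_apply_inr, if_pos rfl, if_neg (Ne.symm hne)] at this
  omega

theorem coeff_Fp_me {n : ℕ} (j : Fin n) : MvPolynomial.coeff (me j) (Fp n) = 1 := by
  classical
  rw [Fp_eq, MvPolynomial.coeff_sum]
  rw [Finset.sum_eq_single_of_mem j (Finset.mem_univ j)]
  · rw [coeff_monomial, if_pos rfl]
  · intro l _ hl
    rw [coeff_monomial, if_neg (fun hc => hl (me_inj hc))]

theorem me_ne_of_inl {n : ℕ} {e : (Unit ⊕ Fin n) →₀ ℕ} (he : e (Sum.inl ()) ≠ 2) :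
    ∀ j, me j ≠ e := fun j hj => he (by rw [← hj, me_apply_inl])

theorem me_ne_of_inr {n : ℕ} {e : (Unit ⊕ Fin n) →₀ ℕ} (i : Fin n)
    (h1 : e (Sum.inr i) ≠ 0) (h2 : e (Sum.inr i) ≠ 2) : ∀ j, me j ≠ e := by
  intro j hj
  rcases eq_or_ne j i with rfl | hne
  · exact h2 (by rw [← hj, me_apply_inr, if_pos rfl])
  · exact h1 (by rw [← hj, me_apply_inr, if_neg hne])

theorem me_ne_two_coords {n : ℕ} {e : (Unit ⊕ Fin n) →₀ ℕ} (i i' : Fin n) (hne : i ≠ i')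
    (h1 : e (Sum.inr i) = 2) (h2 : e (Sum.inr i') = 2) : ∀ j, me j ≠ e := by
  intro j hj
  have e1 : j = i := by
    by_contra hc
    rw [← hj, me_apply_inr, if_neg hc] at h1; omega
  have e2 : j = i' := by
    by_contra hc
    rw [← hj, me_apply_inr, if_neg hc] at h2; omega
  exact hne (e1 ▸ e2)

theorem me_ne_of_no_two {n : ℕ} {e : (Unit ⊕ Fin n) →₀ ℕ} (he : ∀ i, e (Sum.inr i) ≠ 2) :
    ∀ j, me j ≠ e := fun j hj => he j (by rw [← hj, me_apply_inr, if_pos rfl])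

theorem coeff_apolar_bv {n : ℕ} (h : 2 ≤ n) (p q : Fin 3 × Option (Option (Fin n))) :
    MvPolynomial.coeff (tv n h p) (apolar (bv n h q) (Fp n)) =
      if q = p then dval n q else 0 := by
  classical
  rcases p with ⟨a', o'⟩
  rcases q with ⟨a, o⟩
  have ha := a.isLt
  have ha' := a'.isLt
  rw [bv, apolar_monomial, one_smul, coeff_contract]
  by_cases haa : a = a'
  case neg =>
    have hv : (a : ℕ) ≠ (a' : ℕ) := fun hc => haa (Fin.val_injective hc)
    rw [if_neg (fun hc => haa (congrArg Prod.fst hc))]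
    rw [coeff_Fp_ne _ (me_ne_of_inl ?_), zero_mul]
    rcases o' with _ | _ | i' <;> rcases o with _ | _ | i <;>
      simp [tv, mv, Finsupp.add_apply, Finsupp.single_apply] <;> omega
  case pos =>
    subst haa
    rcases o' with _ | _ | i'
    · rcases o with _ | _ | i
      · -- diagonal (none, none)
        rw [if_pos rfl]
        have hS : tv n h ((a : Fin 3), none) + mv n h (a, none) =
            me (⟨1, by omega⟩ : Fin n) := by
          ext t
          rcases t with u | l
          · cases u
            simp [tv, mv, me, Finsupp.add_apply, Finsupp.single_apply]
            omega
          · simp [tv, mv, me, Finsupp.add_apply, Finsupp.single_apply]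
        rw [hS, coeff_Fp_me, one_mul, mv, Finsupp.prod_single_index (by simp),
          me_apply_inl, dval]
      · -- (none, some none)
        rw [if_neg (by simp)]
        rw [coeff_Fp_ne _ (me_ne_two_coords (⟨1, by omega⟩ : Fin n) (⟨0, by omega⟩ : Fin n)
          (fun hc => by exact absurd (congrArg Fin.val hc) (by norm_num)) ?_ ?_), zero_mul] <;>
          simp [tv, mv, Finsupp.add_apply, Finsupp.single_apply, Fin.ext_iff]
      · -- (none, some (some i))
        rw [if_neg (by simp)]
        rw [coeff_Fp_ne _ (me_ne_of_inr i ?_ ?_), zero_mul] <;>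
          · simp only [tv, mv, Finsupp.add_apply, Finsupp.single_apply]
            split_ifs <;> simp_all <;> omega
    · rcases o with _ | _ | i
      · -- (some none, none)
        rw [if_neg (by simp)]
        rw [coeff_Fp_ne _ (me_ne_of_no_two ?_), zero_mul]
        intro i
        simp only [tv, mv, Finsupp.add_apply, Finsupp.single_apply]
        split_ifs <;> simp_all <;> omega
      · -- diagonal (some none, some none)
        rw [if_pos rfl]
        have hS : tv n h ((a : Fin 3), some none) + mv n h (a, some none) =
            me (⟨0, by omega⟩ : Fin n) := by
          ext t
          rcases t with u | l
          · cases u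
            simp [tv, mv, me, Finsupp.add_apply, Finsupp.single_apply]
            omega
          · simp [tv, mv, me, Finsupp.add_apply, Finsupp.single_apply]
        rw [hS, coeff_Fp_me, one_mul, mv]
        rw [Finsupp.prod_add_index_of_disjoint ?_]
        · rw [Finsupp.prod_single_index (by simp), Finsupp.prod_single_index (by simp),
            me_apply_inl, me_apply_inr, if_pos rfl, dval]
          norm_num
          ring
        · refine Finset.disjoint_left.2 fun t ht1 ht2 => ?_
          have h1 := Finsupp.support_single_subset ht1
          have h2 := Finsupp.support_single_subset ht2
          simp only [Finset.mem_singleton] at h1 h2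
          rw [h1] at h2
          exact absurd h2 (by simp)
      · -- (some none, some (some i))
        rw [if_neg (by simp)]
        rw [coeff_Fp_ne _ (me_ne_of_no_two ?_), zero_mul]
        intro l
        simp only [tv, mv, Finsupp.add_apply, Finsupp.single_apply]
        split_ifs <;> simp_all <;> omega
    · rcases o with _ | _ | i
      · -- (some some i', none)
        rw [if_neg (by simp)]
        rw [coeff_Fp_ne _ (me_ne_of_no_two ?_), zero_mul]
        intro l
        simp only [tv, mv, Finsupp.add_apply, Finsupp.single_apply]
        split_ifs <;> simp_all <;> omega
      · -- (some some i', some none)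
        rw [if_neg (by simp)]
        rw [coeff_Fp_ne _ (me_ne_of_inr i' ?_ ?_), zero_mul] <;>
          · simp only [tv, mv, Finsupp.add_apply, Finsupp.single_apply]
            split_ifs <;> simp_all <;> omega
      · -- (some some i', some (some i))
        rcases eq_or_ne i i' with rfl | hii
        · rw [if_pos rfl]
          have hS : tv n h ((a : Fin 3), some (some i)) + mv n h (a, some (some i)) =
              me i := by
            ext t
            rcases t with u | l
            · cases u
              simp [tv, mv, me, Finsupp.add_apply, Finsupp.single_apply]
              omega
            · simp [tv, mv, me, Finsupp.add_apply, Finsupp.single_apply]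
              split_ifs <;> omega
          rw [hS, coeff_Fp_me, one_mul, mv]
          rw [Finsupp.prod_add_index_of_disjoint ?_]
          · rw [Finsupp.prod_single_index (by simp), Finsupp.prod_single_index (by simp),
              me_apply_inl, me_apply_inr, if_pos rfl, dval]
            norm_num
            ring
          · refine Finset.disjoint_left.2 fun t ht1 ht2 => ?_
            have h1 := Finsupp.support_single_subset ht1
            have h2 := Finsupp.support_single_subset ht2
            simp only [Finset.mem_singleton] at h1 h2
            rw [h1] at h2
            exact absurd h2 (by simp)
        · rw [if_neg (by simp [hii])]
          rw [coeff_Fp_ne _ (me_ne_of_inr i' ?_ ?_), zero_mul] <;>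
            · simp only [tv, mv, Finsupp.add_apply, Finsupp.single_apply]
              split_ifs <;> simp_all [Sum.inr.injEq, Ne.symm hii] <;> omega

theorem apolar_finset_sum {σ ι : Type*} (s : Finset ι) (f : ι → MvPolynomial σ ℂ)
    (F : MvPolynomial σ ℂ) : apolar (∑ i ∈ s, f i) F = ∑ i ∈ s, apolar (f i) F := by
  classical
  induction s using Finset.induction_on with
  | empty => simp [apolar_zero_left]
  | insert _ _ hnot ih =>
    rw [Finset.sum_insert hnot, Finset.sum_insert hnot, apolar_add_left, ih]

theorem indep {n : ℕ} (h : 2 ≤ n) (r : MvPolynomial (Unit ⊕ Fin n) ℂ)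
    (hr : r ∈ Submodule.span ℂ (Set.range (bv n h))) (h0 : apolar r (Fp n) = 0) : r = 0 := by
  classical
  obtain ⟨c, hc⟩ := (Submodule.mem_span_range_iff_exists_fun ℂ).1 hr
  have hz : ∀ p, c p = 0 := by
    intro p
    have h1 : MvPolynomial.coeff (tv n h p) (apolar r (Fp n)) = c p * dval n p := by
      rw [← hc, apolar_finset_sum, MvPolynomial.coeff_sum]
      rw [Finset.sum_congr rfl (fun q _ => by
        rw [apolar_smul_left, MvPolynomial.coeff_smul, coeff_apolar_bv h p q])]
      rw [Finset.sum_eq_single_of_mem p (Finset.mem_univ p)]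
      · rw [if_pos rfl, smul_eq_mul]
      · intro q _ hq
        rw [if_neg hq, smul_zero]
    rw [h0] at h1
    simp only [MvPolynomial.coeff_zero] at h1
    exact (mul_eq_zero.1 h1.symm).resolve_right (dval_ne_zero n p)
  rw [← hc]
  simp [hz]

end Main

/-- For `F = x^2(y_1^2 + ⋯ + y_n^2)` with `n ≥ 2`, the annihilator
`F^⊥ = {g | g ∘ F = 0}` equals the ideal
`(X^3, {Y_1^2 − Y_i^2}_{2 ≤ i ≤ n}, {Y_iY_j}_{1 ≤ i < j ≤ n})`. -/
theorem statement1 (n : ℕ) (hn : 2 ≤ n) :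
    ∀ g : MvPolynomial (Unit ⊕ Fin n) ℂ,
      apolar g ((X (Sum.inl ())) ^ 2 * ∑ j, (X (Sum.inr j)) ^ 2) = 0 ↔
      g ∈ Ideal.span
        ({(X (Sum.inl ()) : MvPolynomial (Unit ⊕ Fin n) ℂ) ^ 3} ∪
         {p | ∃ i : Fin n, i ≠ ⟨0, by omega⟩ ∧
            p = X (Sum.inr (⟨0, by omega⟩ : Fin n)) ^ 2 - X (Sum.inr i) ^ 2} ∪
         {p | ∃ i j : Fin n, i < j ∧ p = X (Sum.inr i) * X (Sum.inr j)}) := by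
  intro g
  constructor
  · intro h0
    obtain ⟨r, hr, hd⟩ := reduce hn g
    have hgr : apolar (g - r) (Fp n) = 0 := apolar_eq_zero_of_mem hn _ hd
    have h0' : apolar g (Fp n) = 0 := h0
    have hr0 : apolar r (Fp n) = 0 := by
      have hx : apolar r (Fp n) = apolar g (Fp n) - apolar (g - r) (Fp n) := by
        rw [apolar_sub_left]; ring
      rw [hx, h0', hgr, sub_zero]
    rw [indep hn r hr hr0, sub_zero] at hd
    exact hd
  · intro hg
    exact apolar_eq_zero_of_mem hn g hg
end

section
/- Let 𝕏 be a finite set of points in ℙ^{m+n−1} with homogeneous coordinate ring ℂ[X_1,...,X_m,Y_1,...,Y_n], such that no point of 𝕏 lies in the center of projection V(Y_1,...,Y_n). Let 𝕐 be the image of 𝕏 under projection from V(Y_1,...,Y_n) onto V(X_1,...,X_m). Then I(𝕐) = (X_1,...,X_m) + (I(𝕏) ∩ ℂ[Y_1,...,Y_n]). -/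
open MvPolynomial
open scoped Classical

noncomputable def vIdeal {σ : Type*} (S : Set (σ → ℂ)) : Ideal (MvPolynomial σ ℂ) :=
  ⨅ v ∈ S, ⨅ c : ℂ, RingHom.ker (MvPolynomial.eval (c • v))

lemma mem_vIdeal {σ : Type*} {S : Set (σ → ℂ)} {f : MvPolynomial σ ℂ} :
    f ∈ vIdeal S ↔ ∀ v ∈ S, ∀ c : ℂ, eval (c • v) f = 0 := by
  simp [vIdeal, Submodule.mem_iInf, RingHom.mem_ker]

/-- evaluations agreeing on `s` agree on polynomials supported in `s`. -/
lemma eval_eq_of_supported {σ : Type*} {s : Set σ} {g : MvPolynomial σ ℂ}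
    (hg : g ∈ supported ℂ s) {w w' : σ → ℂ} (h : ∀ i ∈ s, w i = w' i) :
    eval w g = eval w' g := by
  rw [supported] at hg
  induction hg using Algebra.adjoin_induction with
  | mem x hx =>
    obtain ⟨i, hi, rfl⟩ := hx
    simp [h i hi]
  | algebraMap r => simp
  | add x y hx hy ihx ihy => simp [ihx, ihy]
  | mul x y hx hy ihx ihy => simp [ihx, ihy]

/-- If `𝕏` is a finite set of points of `ℙ^{m+n−1}` (given by nonzero representative
vectors), none lying in the center `V(Y_1,…,Y_n)`, and `𝕐` is its projection onto
`V(X_1,…,X_m)`, then `I(𝕐) = (X_1,…,X_m) + (I(𝕏) ∩ ℂ[Y_1,…,Y_n])`. -/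
theorem statement5 (m n : ℕ) (𝕏 : Finset ((Fin m ⊕ Fin n) → ℂ))
    (h0 : ∀ v ∈ 𝕏, v ≠ 0)
    (hc : ∀ v ∈ 𝕏, ∃ j : Fin n, v (Sum.inr j) ≠ 0) :
    vIdeal ↑(𝕏.image fun v =>
        Sum.elim (fun _ : Fin m => (0 : ℂ)) fun j : Fin n => v (Sum.inr j)) =
      Ideal.span (Set.range fun i : Fin m =>
        (X (Sum.inl i) : MvPolynomial (Fin m ⊕ Fin n) ℂ)) ⊔
      Ideal.span (SetLike.coe (vIdeal (↑𝕏 : Set ((Fin m ⊕ Fin n) → ℂ))) ∩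
        SetLike.coe (MvPolynomial.supported ℂ
          (Set.range (Sum.inr : Fin n → Fin m ⊕ Fin n)))) := by
  classical
  set π : ((Fin m ⊕ Fin n) → ℂ) → ((Fin m ⊕ Fin n) → ℂ) := fun v =>
    Sum.elim (fun _ : Fin m => (0 : ℂ)) fun j : Fin n => v (Sum.inr j) with hπ
  set J : Ideal (MvPolynomial (Fin m ⊕ Fin n) ℂ) :=
    Ideal.span (Set.range fun i : Fin m => (X (Sum.inl i) : MvPolynomial (Fin m ⊕ Fin n) ℂ)) with hJ
  -- the "set X to zero" substitution
  set p : (Fin m ⊕ Fin n) → MvPolynomial (Fin m ⊕ Fin n) ℂ :=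
    Sum.elim (fun _ : Fin m => (0 : MvPolynomial (Fin m ⊕ Fin n) ℂ)) fun j : Fin n => X (Sum.inr j) with hp
  set φ : MvPolynomial (Fin m ⊕ Fin n) ℂ →ₐ[ℂ] MvPolynomial (Fin m ⊕ Fin n) ℂ := aeval p with hφ
  have hφX : ∀ i : Fin m ⊕ Fin n, φ (X i) = p i := fun i => aeval_X p i
  -- Fact A
  have factA : ∀ f : MvPolynomial (Fin m ⊕ Fin n) ℂ, f - φ f ∈ J := by
    intro f
    induction f using MvPolynomial.induction_on with
    | C a => simp
    | add f g hf hg =>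
      have : f + g - φ (f + g) = (f - φ f) + (g - φ g) := by
        rw [map_add]; ring
      rw [this]; exact J.add_mem hf hg
    | mul_X f i hf =>
      rcases i with i | j
      · have h1 : X (Sum.inl i) ∈ J :=
          Ideal.subset_span ⟨i, rfl⟩
        have : f * X (Sum.inl i) - φ (f * X (Sum.inl i)) = f * X (Sum.inl i) := by
          rw [map_mul, hφX]; simp [hp]
        rw [this]; exact J.mul_mem_left f h1
      · have : f * X (Sum.inr j) - φ (f * X (Sum.inr j)) = (f - φ f) * X (Sum.inr j) := by
          rw [map_mul, hφX]; simp [hp]; ring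
        rw [this]; exact J.mul_mem_right _ hf
  -- Fact B
  have factB : ∀ f : MvPolynomial (Fin m ⊕ Fin n) ℂ, φ f ∈ supported ℂ (Set.range (Sum.inr : Fin n → Fin m ⊕ Fin n)) := by
    intro f
    induction f using MvPolynomial.induction_on with
    | C a => rw [hφ, aeval_C]; exact (supported ℂ _).algebraMap_mem a
    | add f g hf hg => rw [map_add]; exact add_mem hf hg
    | mul_X f i hf =>
      rw [map_mul, hφX]
      rcases i with i | j
      · rw [hp]; simpa using zero_mem (supported ℂ (Set.range (Sum.inr : Fin n → Fin m ⊕ Fin n)))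
      · exact mul_mem hf (X_mem_supported.2 ⟨j, rfl⟩)
  -- elements of J vanish where inl-coordinates vanish
  have hJvanish : ∀ (w : (Fin m ⊕ Fin n) → ℂ), (∀ i : Fin m, w (Sum.inl i) = 0) →
      ∀ g ∈ J, eval w g = 0 := by
    intro w hw g hg
    have : J ≤ RingHom.ker (eval w) := by
      rw [hJ, Ideal.span_le]
      rintro _ ⟨i, rfl⟩
      simp [RingHom.mem_ker, hw i]
    exact this hg
  apply le_antisymm
  · -- hard direction
    intro f hf
    rw [mem_vIdeal] at hf
    have hfπ : ∀ v ∈ 𝕏, ∀ c : ℂ, eval (c • π v) f = 0 := by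
      intro v hv c
      exact hf (π v) (by simp [π]; exact ⟨v, hv, rfl⟩) c
    have hφf : φ f ∈ vIdeal (↑𝕏 : Set ((Fin m ⊕ Fin n) → ℂ)) := by
      rw [mem_vIdeal]
      intro v hv c
      have heq : eval (c • v) (φ f) = eval (c • π v) (φ f) := by
        refine eval_eq_of_supported (factB f) ?_
        rintro _ ⟨j, rfl⟩
        simp [hπ]
      have hzero : eval (c • π v) (f - φ f) = 0 := by
        refine hJvanish _ ?_ _ (factA f)
        intro i; simp [hπ]
      have : eval (c • π v) (φ f) = eval (c • π v) f := by
        have := hzero; rw [map_sub, sub_eq_zero] at this; exact this.symm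
      rw [heq, this, hfπ v hv c]
    have h1 : f - φ f ∈ J := factA f
    have h2 : φ f ∈ Ideal.span (SetLike.coe (vIdeal (↑𝕏 : Set ((Fin m ⊕ Fin n) → ℂ))) ∩
        SetLike.coe (supported ℂ (Set.range (Sum.inr : Fin n → Fin m ⊕ Fin n)))) :=
      Ideal.subset_span ⟨hφf, factB f⟩
    have : f = (f - φ f) + φ f := by ring
    rw [this]
    exact Submodule.add_mem_sup h1 h2
  · refine sup_le ?_ ?_
    · rw [Ideal.span_le]
      rintro _ ⟨i, rfl⟩
      rw [SetLike.mem_coe, mem_vIdeal]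
      rintro w hw c
      simp only [Finset.coe_image, Set.mem_image] at hw
      obtain ⟨v, hv, rfl⟩ := hw
      simp [hπ]
    · rw [Ideal.span_le]
      rintro g ⟨hg1, hg2⟩
      rw [SetLike.mem_coe, mem_vIdeal]
      rintro w hw c
      simp only [Finset.coe_image, Set.mem_image] at hw
      obtain ⟨v, hv, rfl⟩ := hw
      have heq : eval (c • (π v)) g = eval (c • v) g := by
        refine eval_eq_of_supported hg2 ?_
        rintro _ ⟨j, rfl⟩
        simp [hπ]
      rw [SetLike.mem_coe, mem_vIdeal] at hg1
      rw [heq]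
      exact hg1 v hv c
end

section
/- Let n ≥ 2 and let I = ({Y_iY_j}_{1≤i<j≤n}, X_1^2, X_2^2) in T = ℂ[X_1,X_2,Y_1,...,Y_n]. Then the Hilbert function of T/I is: 1 in degree 0, n+2 in degree 1, 3n+1 in degree 2, and 4n in every degree ≥ 3. -/
open MvPolynomial
open scoped Classical

/-- Hilbert function in degree `d` of the graded quotient of the polynomial ring
by the `ℂ`-submodule `N`: the dimension of the image of the space of
degree-`d` homogeneous polynomials in the quotient. -/
noncomputable def hfQ {σ : Type*} (N : Submodule ℂ (MvPolynomial σ ℂ)) (d : ℕ) : ℕ :=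
  Module.finrank ℂ ((homogeneousSubmodule σ ℂ d).map N.mkQ)

section helpers

variable {σ : Type*}

lemma degree_eq_sum_univ [Fintype σ] (u : σ →₀ ℕ) : u.degree = ∑ x, u x := by
  rw [Finsupp.degree]
  exact Finset.sum_subset (Finset.subset_univ _)
    (fun x _ hx => Finsupp.notMem_support_iff.1 hx)

lemma my_degree_single (a : σ) (k : ℕ) : (Finsupp.single a k).degree = k := by
  rcases eq_or_ne k 0 with rfl | hk
  · simp
  · rw [Finsupp.degree_apply, Finsupp.support_single_ne_zero _ hk, Finset.sum_singleton,
      Finsupp.single_eq_same]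

lemma my_degree_add (u v : σ →₀ ℕ) : (u + v).degree = u.degree + v.degree := by
  classical
  simp only [Finsupp.degree_eq_weight_one]
  exact map_add _ _ _

lemma add_le_degree (u : σ →₀ ℕ) {x y : σ} (h : x ≠ y) : u x + u y ≤ u.degree := by
  classical
  by_cases hx : x ∈ u.support
  · by_cases hy : y ∈ u.support
    · have : ({x, y} : Finset σ) ⊆ u.support := by
        intro z hz; simp only [Finset.mem_insert, Finset.mem_singleton] at hz
        rcases hz with rfl | rfl <;> assumption
      calc u x + u y = ∑ z ∈ ({x, y} : Finset σ), u z := (Finset.sum_pair h).symm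
        _ ≤ ∑ z ∈ u.support, u z := Finset.sum_le_sum_of_subset this
    · rw [Finsupp.notMem_support_iff.1 hy, add_zero]; exact Finsupp.le_degree x u
  · rw [Finsupp.notMem_support_iff.1 hx, zero_add]; exact Finsupp.le_degree y u

lemma degree_one_eq_single {u : σ →₀ ℕ} (h : u.degree = 1) : ∃ x, u = Finsupp.single x 1 := by
  have h0 : u ≠ 0 := by
    intro h'; rw [h', map_zero] at h; omega
  obtain ⟨x, hx⟩ : ∃ x, u x ≠ 0 := by
    by_contra hall
    push_neg at hall
    exact h0 (Finsupp.ext fun a => hall a)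
  refine ⟨x, Finsupp.ext fun y => ?_⟩
  rcases eq_or_ne y x with rfl | hy
  · have := Finsupp.le_degree y u
    rw [h] at this
    rw [Finsupp.single_eq_same]; omega
  · have := add_le_degree u hy.symm  -- u x + u y ≤ 1
    rw [h] at this
    rw [Finsupp.single_eq_of_ne' (Ne.symm hy)]
    omega

/-- Key abstract lemma: if membership in `N` is characterized by all support monomials being
"non-standard" (`¬ P`), and `m : κ → exponents` injectively enumerates the standard exponents
of degree `d`, then the Hilbert function of the quotient in degree `d` is `card κ`. -/
lemma hfQ_eq_card (N : Submodule ℂ (MvPolynomial σ ℂ)) (P : (σ →₀ ℕ) → Prop)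
    (hN : ∀ p : MvPolynomial σ ℂ, p ∈ N ↔ ∀ u ∈ p.support, ¬ P u)
    (d : ℕ) (κ : Type*) [Fintype κ] (m : κ → (σ →₀ ℕ))
    (hminj : Function.Injective m)
    (hmP : ∀ k, P (m k)) (hmd : ∀ k, (m k).degree = d)
    (hcomplete : ∀ u : σ →₀ ℕ, P u → u.degree = d → ∃ k, u = m k) :
    hfQ N d = Fintype.card κ := by
  classical
  set L : MvPolynomial σ ℂ →ₗ[ℂ] (κ → ℂ) :=
    { toFun := fun p k => coeff (m k) p
      map_add' := fun p q => by ext k; simp [coeff_add]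
      map_smul' := fun c p => by ext k; simp [coeff_smul] } with hL
  have hker : N ≤ LinearMap.ker L := by
    intro p hp
    rw [LinearMap.mem_ker]
    funext k
    show coeff (m k) p = 0
    by_contra h
    exact (hN p).1 hp (m k) (mem_support_iff.2 h) (hmP k)
  set L' : (MvPolynomial σ ℂ ⧸ N) →ₗ[ℂ] (κ → ℂ) := N.liftQ L hker with hL'
  set M := (homogeneousSubmodule σ ℂ d).map N.mkQ with hM
  set e : M →ₗ[ℂ] (κ → ℂ) := L'.comp M.subtype with he
  have hL'mk : ∀ p : MvPolynomial σ ℂ, L' (N.mkQ p) = L p := fun p => rfl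
  have hsurj : Function.Surjective e := by
    rw [← LinearMap.range_eq_top, ← top_le_iff, ← (Pi.basisFun ℂ κ).span_eq, Submodule.span_le]
    rintro _ ⟨k, rfl⟩
    refine ⟨⟨N.mkQ (monomial (m k) 1), Submodule.mem_map_of_mem
      ((mem_homogeneousSubmodule _ _).2 (isHomogeneous_monomial _ (hmd k)))⟩, ?_⟩
    funext k'
    show coeff (m k') (monomial (m k) 1) = Pi.basisFun ℂ κ k k'
    rw [coeff_monomial, Pi.basisFun_apply]
    by_cases h : k = k'
    · subst h; simp
    · rw [if_neg (fun hh => h (hminj hh))]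
      simp [Pi.single_apply, h]
  have hinj : Function.Injective e := by
    rw [← LinearMap.ker_eq_bot, eq_bot_iff]
    rintro ⟨x, hx⟩ hk
    obtain ⟨p, hp, rfl⟩ := hx
    have hLp : L p = 0 := hk
    have hpN : p ∈ N := by
      rw [hN]
      intro u hu hPu
      have hud : u.degree = d := by
        rw [Finsupp.degree_eq_weight_one]
        exact hp (mem_support_iff.1 hu)
      obtain ⟨k, rfl⟩ := hcomplete u hPu hud
      exact (mem_support_iff.1 hu) (congrFun hLp k)
    rw [Submodule.mem_bot, Subtype.ext_iff]
    show N.mkQ p = 0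
    rw [Submodule.mkQ_apply, Submodule.Quotient.mk_eq_zero]
    exact hpN
  have equiv : M ≃ₗ[ℂ] (κ → ℂ) := LinearEquiv.ofBijective e ⟨hinj, hsurj⟩
  rw [hfQ, ← hM, equiv.finrank_eq, Module.finrank_fintype_fun_eq_card]

end helpers

section main

open Sum

variable {n : ℕ}

/-- Standard (non-divisible) exponents. -/
def Std (n : ℕ) (u : (Fin 2 ⊕ Fin n) →₀ ℕ) : Prop :=
  u (inl 0) ≤ 1 ∧ u (inl 1) ≤ 1 ∧
    ∀ i j : Fin n, i < j → u (inr i) = 0 ∨ u (inr j) = 0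

lemma y_part {u : (Fin 2 ⊕ Fin n) →₀ ℕ}
    (h : ∀ i j : Fin n, i < j → u (inr i) = 0 ∨ u (inr j) = 0) :
    (∀ i, u (inr i) = 0) ∨ ∃ i, ∀ j, j ≠ i → u (inr j) = 0 := by
  by_cases hall : ∀ i, u (inr i) = 0
  · exact Or.inl hall
  · push_neg at hall
    obtain ⟨i, hi⟩ := hall
    refine Or.inr ⟨i, fun j hj => ?_⟩
    rcases lt_or_gt_of_ne hj with hlt | hgt
    · rcases h j i hlt with h' | h'
      · exact h'
      · exact absurd h' hi
    · rcases h i j hgt with h' | h'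
      · exact absurd h' hi
      · exact h'

lemma degree_decomp (u : (Fin 2 ⊕ Fin n) →₀ ℕ) :
    u.degree = u (inl 0) + u (inl 1) + ∑ i, u (inr i) := by
  rw [degree_eq_sum_univ, Fintype.sum_sum_type, Fin.sum_univ_two]

lemma eq_of_components {u v : (Fin 2 ⊕ Fin n) →₀ ℕ}
    (h0 : u (inl 0) = v (inl 0)) (h1 : u (inl 1) = v (inl 1))
    (hr : ∀ i, u (inr i) = v (inr i)) : u = v := by
  ext x
  rcases x with k | i
  · fin_cases k
    · exact h0
    · exact h1
  · exact hr i

end main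

section degrees

open Sum

variable {n : ℕ}

lemma hf0 (N : Submodule ℂ (MvPolynomial (Fin 2 ⊕ Fin n) ℂ))
    (hN : ∀ p, p ∈ N ↔ ∀ u ∈ p.support, ¬ Std n u) : hfQ N 0 = 1 := by
  rw [hfQ_eq_card N (Std n) hN 0 PUnit.{1} (fun _ => 0) (fun a b _ => by cases a; cases b; rfl)
    (fun _ => ⟨by simp, by simp, fun i j _ => Or.inl (by simp)⟩)
    (fun _ => by simp)
    (fun u _ hdeg => ⟨PUnit.unit, (Finsupp.degree_eq_zero_iff u).1 hdeg⟩)]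
  simp

lemma hf1 (N : Submodule ℂ (MvPolynomial (Fin 2 ⊕ Fin n) ℂ))
    (hN : ∀ p, p ∈ N ↔ ∀ u ∈ p.support, ¬ Std n u) : hfQ N 1 = n + 2 := by
  rw [hfQ_eq_card N (Std n) hN 1 (Fin 2 ⊕ Fin n) (fun x => Finsupp.single x 1)
    (Finsupp.single_left_injective one_ne_zero) ?_ (fun x => my_degree_single x 1) ?_]
  · simp only [Fintype.card_sum, Fintype.card_fin]
    omega
  · intro x
    refine ⟨?_, ?_, fun i j hij => ?_⟩
    · rw [Finsupp.single_apply]; split <;> omega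
    · rw [Finsupp.single_apply]; split <;> omega
    · rcases eq_or_ne x (inr i) with rfl | hx
      · exact Or.inr (Finsupp.single_eq_of_ne' (fun hcon => hij.ne (Sum.inr.inj hcon)))
      · exact Or.inl (Finsupp.single_eq_of_ne' hx)
  · intro u _ hdeg
    exact degree_one_eq_single hdeg

noncomputable def m2 (n : ℕ) : Unit ⊕ ((Fin n ⊕ Fin n) ⊕ Fin n) → ((Fin 2 ⊕ Fin n) →₀ ℕ)
  | .inl _ => Finsupp.single (inl 0) 1 + Finsupp.single (inl 1) 1
  | .inr (.inl (.inl i)) => Finsupp.single (inl 0) 1 + Finsupp.single (inr i) 1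
  | .inr (.inl (.inr i)) => Finsupp.single (inl 1) 1 + Finsupp.single (inr i) 1
  | .inr (.inr i) => Finsupp.single (inr i) 2

lemma m2_inj : Function.Injective (m2 n) := by
  intro a b h
  rcases a with ⟨⟩ | ⟨i | i⟩ | i <;> rcases b with ⟨⟩ | ⟨j | j⟩ | j <;>
    first
    | rfl
    | (simpa [m2, Finsupp.single_apply] using DFunLike.congr_fun h (inl 0))
    | (simpa [m2, Finsupp.single_apply] using DFunLike.congr_fun h (inl 1))
    | (rcases eq_or_ne i j with rfl | hne
       · rfl
       · have hx := DFunLike.congr_fun h (inr i)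
         simp [m2, Finsupp.single_apply, hne, hne.symm] at hx)

lemma m2_std (k) : Std n (m2 n k) := by
  rcases k with ⟨⟩ | ⟨i | i⟩ | i
  · exact ⟨by simp [m2], by simp [m2], fun a b hab => Or.inl (by simp [m2])⟩
  · refine ⟨by simp [m2], by simp [m2], fun a b hab => ?_⟩
    rcases eq_or_ne a i with rfl | ha
    · exact Or.inr (by simp [m2, Finsupp.single_apply, hab.ne', hab.ne])
    · exact Or.inl (by simp [m2, Finsupp.single_apply, ha, ha.symm])
  · refine ⟨by simp [m2], by simp [m2], fun a b hab => ?_⟩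
    rcases eq_or_ne a i with rfl | ha
    · exact Or.inr (by simp [m2, Finsupp.single_apply, hab.ne', hab.ne])
    · exact Or.inl (by simp [m2, Finsupp.single_apply, ha, ha.symm])
  · refine ⟨by simp [m2], by simp [m2], fun a b hab => ?_⟩
    rcases eq_or_ne a i with rfl | ha
    · exact Or.inr (by simp [m2, Finsupp.single_apply, hab.ne', hab.ne])
    · exact Or.inl (by simp [m2, Finsupp.single_apply, ha, ha.symm])

lemma m2_deg (k) : (m2 n k).degree = 2 := by
  rcases k with ⟨⟩ | ⟨i | i⟩ | i <;>
    simp [m2, my_degree_add, my_degree_single]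

lemma m2_complete (u : (Fin 2 ⊕ Fin n) →₀ ℕ) (hstd : Std n u) (hdeg : u.degree = 2) :
    ∃ k, u = m2 n k := by
  obtain ⟨h0, h1, hY⟩ := hstd
  rw [degree_decomp] at hdeg
  rcases y_part hY with hz | ⟨i, hi⟩
  · have hs : ∑ i, u (inr i) = 0 := Finset.sum_eq_zero (fun i _ => hz i)
    rw [hs] at hdeg
    refine ⟨.inl (), eq_of_components ?_ ?_ fun j => ?_⟩
    · simp only [m2]; simp; omega
    · simp only [m2]; simp; omega
    · simp [m2, hz j]
  · have hs : ∑ j, u (inr j) = u (inr i) := Fintype.sum_eq_single i hi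
    rw [hs] at hdeg
    rcases Nat.le_one_iff_eq_zero_or_eq_one.1 h0 with ha | ha <;>
      rcases Nat.le_one_iff_eq_zero_or_eq_one.1 h1 with hb | hb
    · refine ⟨.inr (.inr i), eq_of_components ?_ ?_ fun j => ?_⟩
      · simpa [m2] using ha
      · simpa [m2] using hb
      · rcases eq_or_ne j i with rfl | hj
        · simp [m2]; omega
        · simp [m2, Finsupp.single_apply, hj.symm, hi j hj]
    · refine ⟨.inr (.inl (.inr i)), eq_of_components ?_ ?_ fun j => ?_⟩
      · simpa [m2] using ha
      · simpa [m2] using hb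
      · rcases eq_or_ne j i with rfl | hj
        · simp [m2, Finsupp.single_apply]; omega
        · simp [m2, Finsupp.single_apply, hj.symm, hi j hj]
    · refine ⟨.inr (.inl (.inl i)), eq_of_components ?_ ?_ fun j => ?_⟩
      · simpa [m2] using ha
      · simpa [m2] using hb
      · rcases eq_or_ne j i with rfl | hj
        · simp [m2, Finsupp.single_apply]; omega
        · simp [m2, Finsupp.single_apply, hj.symm, hi j hj]
    · refine ⟨.inl (), eq_of_components ?_ ?_ fun j => ?_⟩
      · simpa [m2] using ha
      · simpa [m2] using hb
      · rcases eq_or_ne j i with rfl | hj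
        · simp [m2, Finsupp.single_apply]; omega
        · simp [m2, Finsupp.single_apply, hi j hj]

lemma hf2 (N : Submodule ℂ (MvPolynomial (Fin 2 ⊕ Fin n) ℂ))
    (hN : ∀ p, p ∈ N ↔ ∀ u ∈ p.support, ¬ Std n u) : hfQ N 2 = 3 * n + 1 := by
  rw [hfQ_eq_card N (Std n) hN 2 _ (m2 n) m2_inj m2_std m2_deg m2_complete]
  simp only [Fintype.card_sum, Fintype.card_fin, Fintype.card_unit]
  omega

end degrees

section deg3

open Sum

variable {n : ℕ}

noncomputable def m3 (n d : ℕ) : (Fin n ⊕ Fin n) ⊕ (Fin n ⊕ Fin n) → ((Fin 2 ⊕ Fin n) →₀ ℕ)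
  | .inl (.inl i) => Finsupp.single (inr i) d
  | .inl (.inr i) => Finsupp.single (inl 0) 1 + Finsupp.single (inr i) (d - 1)
  | .inr (.inl i) => Finsupp.single (inl 1) 1 + Finsupp.single (inr i) (d - 1)
  | .inr (.inr i) =>
      Finsupp.single (inl 0) 1 + Finsupp.single (inl 1) 1 + Finsupp.single (inr i) (d - 2)

variable {d : ℕ} (hd : 3 ≤ d)

include hd

lemma m3_inj : Function.Injective (m3 n d) := by
  intro a b h
  rcases a with ⟨i | i⟩ | ⟨i | i⟩ <;> rcases b with ⟨j | j⟩ | ⟨j | j⟩ <;>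
    first
    | rfl
    | (simpa [m3, Finsupp.single_apply] using DFunLike.congr_fun h (inl 0))
    | (simpa [m3, Finsupp.single_apply] using DFunLike.congr_fun h (inl 1))
    | (rcases eq_or_ne i j with rfl | hne
       · rfl
       · have hx := DFunLike.congr_fun h (inr i)
         simp [m3, Finsupp.single_apply, hne, hne.symm] at hx
         omega)

omit hd in
lemma m3_std (k) : Std n (m3 n d k) := by
  rcases k with ⟨i | i⟩ | ⟨i | i⟩ <;>
    (refine ⟨by simp [m3, Finsupp.single_apply], by simp [m3, Finsupp.single_apply],
      fun a b hab => ?_⟩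
     rcases eq_or_ne a i with rfl | ha
     · exact Or.inr (by simp [m3, Finsupp.single_apply, hab.ne', hab.ne])
     · exact Or.inl (by simp [m3, Finsupp.single_apply, ha, ha.symm]))

lemma m3_deg (k) : (m3 n d k).degree = d := by
  rcases k with ⟨i | i⟩ | ⟨i | i⟩
  · simp only [m3]; rw [my_degree_single]
  · simp only [m3]; rw [my_degree_add, my_degree_single, my_degree_single]; omega
  · simp only [m3]; rw [my_degree_add, my_degree_single, my_degree_single]; omega
  · simp only [m3]
    rw [my_degree_add, my_degree_add, my_degree_single, my_degree_single, my_degree_single]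
    omega

lemma m3_complete (u : (Fin 2 ⊕ Fin n) →₀ ℕ) (hstd : Std n u) (hdeg : u.degree = d) :
    ∃ k, u = m3 n d k := by
  obtain ⟨h0, h1, hY⟩ := hstd
  rw [degree_decomp] at hdeg
  rcases y_part hY with hz | ⟨i, hi⟩
  · exfalso
    have hs : ∑ i, u (inr i) = 0 := Finset.sum_eq_zero (fun i _ => hz i)
    omega
  · have hs : ∑ j, u (inr j) = u (inr i) := Fintype.sum_eq_single i hi
    rw [hs] at hdeg
    rcases Nat.le_one_iff_eq_zero_or_eq_one.1 h0 with ha | ha <;>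
      rcases Nat.le_one_iff_eq_zero_or_eq_one.1 h1 with hb | hb
    · refine ⟨.inl (.inl i), eq_of_components ?_ ?_ fun j => ?_⟩
      · simpa [m3, Finsupp.single_apply] using ha
      · simpa [m3, Finsupp.single_apply] using hb
      · rcases eq_or_ne j i with rfl | hj
        · simp [m3, Finsupp.single_apply]; omega
        · simp [m3, Finsupp.single_apply, hj.symm, hi j hj]
    · refine ⟨.inr (.inl i), eq_of_components ?_ ?_ fun j => ?_⟩
      · simpa [m3, Finsupp.single_apply] using ha
      · simpa [m3, Finsupp.single_apply] using hb
      · rcases eq_or_ne j i with rfl | hj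
        · simp [m3, Finsupp.single_apply]; omega
        · simp [m3, Finsupp.single_apply, hj.symm, hi j hj]
    · refine ⟨.inl (.inr i), eq_of_components ?_ ?_ fun j => ?_⟩
      · simpa [m3, Finsupp.single_apply] using ha
      · simpa [m3, Finsupp.single_apply] using hb
      · rcases eq_or_ne j i with rfl | hj
        · simp [m3, Finsupp.single_apply]; omega
        · simp [m3, Finsupp.single_apply, hj.symm, hi j hj]
    · refine ⟨.inr (.inr i), eq_of_components ?_ ?_ fun j => ?_⟩
      · simpa [m3, Finsupp.single_apply] using ha
      · simpa [m3, Finsupp.single_apply] using hb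
      · rcases eq_or_ne j i with rfl | hj
        · simp [m3, Finsupp.single_apply]; omega
        · simp [m3, Finsupp.single_apply, hj.symm, hi j hj]

lemma hf3 (N : Submodule ℂ (MvPolynomial (Fin 2 ⊕ Fin n) ℂ))
    (hN : ∀ p, p ∈ N ↔ ∀ u ∈ p.support, ¬ Std n u) : hfQ N d = 4 * n := by
  rw [hfQ_eq_card N (Std n) hN d _ (m3 n d) (m3_inj hd) m3_std (m3_deg hd)
    (m3_complete hd)]
  simp only [Fintype.card_sum, Fintype.card_fin]
  omega

end deg3

section final

open Sum

variable {n : ℕ}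

/-- The exponents of the monomial generators. -/
def G (n : ℕ) : Set ((Fin 2 ⊕ Fin n) →₀ ℕ) :=
  {v | ∃ i j : Fin n, i < j ∧ v = Finsupp.single (inr i) 1 + Finsupp.single (inr j) 1} ∪
  {Finsupp.single (inl 0) 2, Finsupp.single (inl 1) 2}

lemma hset :
    ({p | ∃ i j : Fin n, i < j ∧ p = X (Sum.inr i) * X (Sum.inr j)} ∪
       {(X (Sum.inl 0) : MvPolynomial (Fin 2 ⊕ Fin n) ℂ) ^ 2, (X (Sum.inl 1)) ^ 2})
    = (fun s => monomial s (1 : ℂ)) '' G n := by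
  have hXX : ∀ a b : Fin 2 ⊕ Fin n, (X a * X b : MvPolynomial (Fin 2 ⊕ Fin n) ℂ)
      = monomial (Finsupp.single a 1 + Finsupp.single b 1) 1 := by
    intro a b
    rw [show (X a : MvPolynomial (Fin 2 ⊕ Fin n) ℂ) = monomial (Finsupp.single a 1) 1 from rfl,
      show (X b : MvPolynomial (Fin 2 ⊕ Fin n) ℂ) = monomial (Finsupp.single b 1) 1 from rfl,
      monomial_mul, one_mul]
  ext p
  simp only [Set.mem_union, Set.mem_setOf_eq, Set.mem_insert_iff, Set.mem_singleton_iff,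
    Set.mem_image, G]
  constructor
  · rintro (⟨i, j, hij, rfl⟩ | rfl | rfl)
    · exact ⟨_, Or.inl ⟨i, j, hij, rfl⟩, (hXX _ _).symm⟩
    · exact ⟨_, Or.inr (Or.inl rfl), X_pow_eq_monomial.symm⟩
    · exact ⟨_, Or.inr (Or.inr rfl), X_pow_eq_monomial.symm⟩
  · rintro ⟨v, (⟨i, j, hij, rfl⟩ | rfl | rfl), rfl⟩
    · exact Or.inl ⟨i, j, hij, (hXX _ _).symm⟩
    · exact Or.inr (Or.inl X_pow_eq_monomial.symm)
    · exact Or.inr (Or.inr X_pow_eq_monomial.symm)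

lemma exists_le_iff (u : (Fin 2 ⊕ Fin n) →₀ ℕ) :
    (∃ g ∈ G n, g ≤ u) ↔ ¬ Std n u := by
  constructor
  · rintro ⟨g, hg, hle⟩ ⟨h0, h1, hY⟩
    rcases hg with ⟨i, j, hij, rfl⟩ | rfl | rfl
    · have hi := Finsupp.le_def.1 hle (inr i)
      have hj := Finsupp.le_def.1 hle (inr j)
      rw [show ((Finsupp.single (inr i) 1 + Finsupp.single (inr j) 1 :
          (Fin 2 ⊕ Fin n) →₀ ℕ)) (inr i) = 1 by
        simp [Finsupp.single_apply, hij.ne, hij.ne']] at hi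
      rw [show ((Finsupp.single (inr i) 1 + Finsupp.single (inr j) 1 :
          (Fin 2 ⊕ Fin n) →₀ ℕ)) (inr j) = 1 by
        simp [Finsupp.single_apply, hij.ne, hij.ne']] at hj
      rcases hY i j hij with h | h <;> omega
    · have := Finsupp.single_le_iff.1 hle
      omega
    · have := Finsupp.single_le_iff.1 hle
      omega
  · intro h
    by_cases h0 : u (inl 0) ≤ 1
    · by_cases h1 : u (inl 1) ≤ 1
      · have hY : ¬ ∀ i j : Fin n, i < j → u (inr i) = 0 ∨ u (inr j) = 0 :=
          fun hY => h ⟨h0, h1, hY⟩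
        push_neg at hY
        obtain ⟨i, j, hij, hi, hj⟩ := hY
        refine ⟨_, Or.inl ⟨i, j, hij, rfl⟩, Finsupp.le_def.2 fun x => ?_⟩
        rcases x with k | l
        · simp [Finsupp.single_apply]
        · rcases eq_or_ne l i with rfl | hli
          · rw [show ((Finsupp.single (inr l) 1 + Finsupp.single (inr j) 1 :
                (Fin 2 ⊕ Fin n) →₀ ℕ)) (inr l) = 1 by
              simp [Finsupp.single_apply, hij.ne, hij.ne']]
            omega
          · rcases eq_or_ne l j with rfl | hlj
            · rw [show ((Finsupp.single (inr i) 1 + Finsupp.single (inr l) 1 :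
                  (Fin 2 ⊕ Fin n) →₀ ℕ)) (inr l) = 1 by
                simp [Finsupp.single_apply, hij.ne, hij.ne']]
              omega
            · rw [show ((Finsupp.single (inr i) 1 + Finsupp.single (inr j) 1 :
                  (Fin 2 ⊕ Fin n) →₀ ℕ)) (inr l) = 0 by
                simp [Finsupp.single_apply, hli.symm, hlj.symm]]
              omega
      · exact ⟨_, Or.inr (Or.inr rfl), Finsupp.single_le_iff.2 (by omega)⟩
    · exact ⟨_, Or.inr (Or.inl rfl), Finsupp.single_le_iff.2 (by omega)⟩

end final

/-- For `n ≥ 2` and `I = ({Y_iY_j}_{i<j}, X_1^2, X_2^2)` in `ℂ[X_1,X_2,Y_1,…,Y_n]`, the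
Hilbert function of `T/I` is `1, n+2, 3n+1` in degrees `0,1,2` and `4n` in degrees `≥ 3`. -/
theorem statement10 (n : ℕ) (hn : 2 ≤ n) :
    let I : Ideal (MvPolynomial (Fin 2 ⊕ Fin n) ℂ) := Ideal.span
      ({p | ∃ i j : Fin n, i < j ∧ p = X (Sum.inr i) * X (Sum.inr j)} ∪
       {(X (Sum.inl 0) : MvPolynomial (Fin 2 ⊕ Fin n) ℂ) ^ 2, (X (Sum.inl 1)) ^ 2})
    hfQ (Submodule.restrictScalars ℂ I) 0 = 1 ∧
    hfQ (Submodule.restrictScalars ℂ I) 1 = n + 2 ∧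
    hfQ (Submodule.restrictScalars ℂ I) 2 = 3 * n + 1 ∧
    ∀ d, 3 ≤ d → hfQ (Submodule.restrictScalars ℂ I) d = 4 * n := by
  intro I
  have hmem : ∀ p : MvPolynomial (Fin 2 ⊕ Fin n) ℂ,
      p ∈ Submodule.restrictScalars ℂ I ↔ ∀ u ∈ p.support, ¬ Std n u := by
    intro p
    rw [Submodule.restrictScalars_mem]
    show p ∈ Ideal.span _ ↔ _
    rw [hset, mem_ideal_span_monomial_image]
    exact forall₂_congr fun u _ => exists_le_iff u
  exact ⟨hf0 _ hmem, hf1 _ hmem, hf2 _ hmem, fun d hd => hf3 hd _ hmem⟩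
end

section
/- Let m, n ≥ 2 and F = (x_1^2 + ... + x_m^2)(y_1^2 + ... + y_n^2). Then the Waring rank of F satisfies rk F ≤ 2mn. -/
open MvPolynomial
open scoped Classical

/-- The Waring rank of a degree-`d` form `F`: the least `r` such that `F` is a
linear combination of `r` `d`-th powers of linear forms. -/
noncomputable def waringRank {σ : Type*} [Fintype σ] (d : ℕ) (F : MvPolynomial σ ℂ) : ℕ :=
  sInf {r | ∃ c : Fin r → ℂ, ∃ L : Fin r → σ → ℂ,
    F = ∑ i, MvPolynomial.C (c i) * (∑ j, MvPolynomial.C (L i j) * X j) ^ d}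

lemma sum_root_aux (k : ℕ) (hk : 2 ≤ k) :
    ∑ i : Fin k, Complex.exp (2 * Real.pi * Complex.I / k) ^ (i : ℕ) = 0 := by
  have h := Complex.isPrimitiveRoot_exp k (by omega)
  have h2 := h.geom_sum_eq_zero (by omega)
  rw [Fin.sum_univ_eq_sum_range]
  exact h2

noncomputable def uu (m n : ℕ) (i : Fin m) (j : Fin n) : ℂ :=
  Complex.exp (Real.pi * Complex.I * (((i : ℕ) : ℂ) / m - ((j : ℕ) : ℂ) / n))

noncomputable def vv (m n : ℕ) (i : Fin m) (j : Fin n) : ℂ :=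
  Complex.exp (-(Real.pi * Complex.I * (((i : ℕ) : ℂ) / m - ((j : ℕ) : ℂ) / n)))

lemma uu_mul_vv (m n : ℕ) (i : Fin m) (j : Fin n) : uu m n i j * vv m n i j = 1 := by
  rw [uu, vv, ← Complex.exp_add]; simp

lemma uu_sq (m n : ℕ) (i : Fin m) (j : Fin n) :
    uu m n i j ^ 2 = Complex.exp (2 * Real.pi * Complex.I / m) ^ (i : ℕ) *
      (Complex.exp (2 * Real.pi * Complex.I / n) ^ (j : ℕ))⁻¹ := by
  rw [uu, ← inv_pow, ← Complex.exp_neg, ← Complex.exp_nat_mul, ← Complex.exp_nat_mul,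
    ← Complex.exp_nat_mul, ← Complex.exp_add]
  congr 1
  push_cast
  ring

lemma vv_sq (m n : ℕ) (i : Fin m) (j : Fin n) :
    vv m n i j ^ 2 = (Complex.exp (2 * Real.pi * Complex.I / m) ^ (i : ℕ))⁻¹ *
      Complex.exp (2 * Real.pi * Complex.I / n) ^ (j : ℕ) := by
  rw [vv, ← inv_pow, ← Complex.exp_neg, ← Complex.exp_nat_mul, ← Complex.exp_nat_mul,
    ← Complex.exp_nat_mul, ← Complex.exp_add]
  congr 1
  push_cast
  ring

lemma vv_sum (m n : ℕ) (hn : 2 ≤ n) (i : Fin m) : ∑ j : Fin n, vv m n i j ^ 2 = 0 := by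
  simp only [vv_sq]
  rw [← Finset.mul_sum, sum_root_aux n hn, mul_zero]

lemma uu_sum (m n : ℕ) (hm : 2 ≤ m) (j : Fin n) : ∑ i : Fin m, uu m n i j ^ 2 = 0 := by
  simp only [uu_sq]
  rw [← Finset.sum_mul, sum_root_aux m hm, zero_mul]

/-- For `m, n ≥ 2` and `F = (x_1^2 + ⋯ + x_m^2)(y_1^2 + ⋯ + y_n^2)`, `rk F ≤ 2mn`. -/
theorem statement14 (m n : ℕ) (hm : 2 ≤ m) (hn : 2 ≤ n) :
    waringRank 4 ((∑ i, (X (Sum.inl i) : MvPolynomial (Fin m ⊕ Fin n) ℂ) ^ 2) *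
      ∑ j, (X (Sum.inr j)) ^ 2) ≤ 2 * m * n := by
  classical
  have hcard : Fintype.card (Fin m × Fin n × Bool) = 2 * m * n := by
    simp [Fintype.card_prod]
    ring
  let e : Fin (2 * m * n) ≃ Fin m × Fin n × Bool := (Fintype.equivFinOfCardEq hcard).symm
  set c : Fin m × Fin n × Bool → ℂ :=
    fun p => (1 / 12 : ℂ) * vv m n p.1 p.2.1 ^ 2 with hc
  set L : Fin m × Fin n × Bool → (Fin m ⊕ Fin n) → ℂ := fun p =>
    Sum.elim (fun i' => if i' = p.1 then (1 : ℂ) else 0)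
      (fun j' => if j' = p.2.1 then
        (if p.2.2 then uu m n p.1 p.2.1 else -uu m n p.1 p.2.1) else 0) with hL
  apply Nat.sInf_le
  refine ⟨fun k => c (e k), fun k => L (e k), ?_⟩
  have hre : (∑ k : Fin (2 * m * n), C (c (e k)) *
        (∑ s, C (L (e k) s) * X s) ^ 4) =
      ∑ p : Fin m × Fin n × Bool, C (c p) * (∑ s, C (L p s) * X s) ^ 4 :=
    Equiv.sum_comp e (fun p => C (c p) * (∑ s, C (L p s) * X s) ^ 4)
  rw [hre]
  have hlin : ∀ p : Fin m × Fin n × Bool,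
      (∑ s, C (L p s) * X s) = X (Sum.inl p.1) +
        C (if p.2.2 then uu m n p.1 p.2.1 else -uu m n p.1 p.2.1) * X (Sum.inr p.2.1) := by
    intro p
    rw [Fintype.sum_sum_type]
    simp only [hL, Sum.elim_inl, Sum.elim_inr,
      apply_ite (C : ℂ → MvPolynomial (Fin m ⊕ Fin n) ℂ), map_zero, map_one, ite_mul,
      one_mul, zero_mul]
    rw [Finset.sum_ite_eq', Finset.sum_ite_eq']
    simp
  simp only [hlin]
  simp only [Fintype.sum_prod_type, Fintype.sum_bool]
  simp only [reduceIte, Bool.false_eq_true, if_false]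
  have step : ∀ (i : Fin m) (j : Fin n),
      C (c (i, j, true)) * (X (Sum.inl i) + C (uu m n i j) * X (Sum.inr j)) ^ 4 +
      C (c (i, j, false)) * (X (Sum.inl i) + C (-uu m n i j) * X (Sum.inr j)) ^ 4 =
      (C (vv m n i j)) ^ 2 * (2 * C (1/12 : ℂ) *
          (X (Sum.inl i) : MvPolynomial (Fin m ⊕ Fin n) ℂ) ^ 4) +
        (X (Sum.inl i)) ^ 2 * (X (Sum.inr j)) ^ 2 +
        (C (uu m n i j)) ^ 2 * (2 * C (1/12 : ℂ) * (X (Sum.inr j)) ^ 4) := by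
    intro i j
    have huv : (C (uu m n i j) : MvPolynomial (Fin m ⊕ Fin n) ℂ) * C (vv m n i j) = 1 := by
      rw [← map_mul, uu_mul_vv, map_one]
    have hk : (C (1/12 : ℂ) : MvPolynomial (Fin m ⊕ Fin n) ℂ) * 12 = 1 := by
      rw [show ((12 : MvPolynomial (Fin m ⊕ Fin n) ℂ)) = C (12 : ℂ) from (map_ofNat C 12).symm, ← map_mul]
      norm_num
    simp only [hc, map_mul, map_neg, map_pow]
    linear_combination (12 * (C (1/12 : ℂ) : MvPolynomial (Fin m ⊕ Fin n) ℂ) *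
        (C (uu m n i j) * C (vv m n i j) + 1) * (X (Sum.inl i)) ^ 2 * (X (Sum.inr j)) ^ 2 +
        2 * C (1/12 : ℂ) * (C (uu m n i j)) ^ 2 * (C (uu m n i j) * C (vv m n i j) + 1) *
        (X (Sum.inr j)) ^ 4) * huv +
      (X (Sum.inl i) : MvPolynomial (Fin m ⊕ Fin n) ℂ) ^ 2 * (X (Sum.inr j)) ^ 2 * hk
  simp only [step]
  simp only [Finset.sum_add_distrib]
  have h1 : ∀ i : Fin m, ∑ j : Fin n,
      (C (vv m n i j) : MvPolynomial (Fin m ⊕ Fin n) ℂ) ^ 2 *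
        (2 * C (1/12 : ℂ) * X (Sum.inl i) ^ 4) = 0 := by
    intro i
    rw [← Finset.sum_mul]
    have hz : ∑ j : Fin n, (C (vv m n i j) : MvPolynomial (Fin m ⊕ Fin n) ℂ) ^ 2 = 0 := by
      simp only [← map_pow]
      rw [← map_sum, vv_sum m n hn i, map_zero]
    rw [hz, zero_mul]
  have h3 : ∀ j : Fin n, ∑ i : Fin m,
      (C (uu m n i j) : MvPolynomial (Fin m ⊕ Fin n) ℂ) ^ 2 *
        (2 * C (1/12 : ℂ) * X (Sum.inr j) ^ 4) = 0 := by
    intro j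
    rw [← Finset.sum_mul]
    have hz : ∑ i : Fin m, (C (uu m n i j) : MvPolynomial (Fin m ⊕ Fin n) ℂ) ^ 2 = 0 := by
      simp only [← map_pow]
      rw [← map_sum, uu_sum m n hm j, map_zero]
    rw [hz, zero_mul]
  rw [show (∑ i : Fin m, ∑ j : Fin n,
      (C (uu m n i j) : MvPolynomial (Fin m ⊕ Fin n) ℂ) ^ 2 *
        (2 * C (1/12 : ℂ) * X (Sum.inr j) ^ 4)) =
    ∑ j : Fin n, ∑ i : Fin m,
      (C (uu m n i j) : MvPolynomial (Fin m ⊕ Fin n) ℂ) ^ 2 *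
        (2 * C (1/12 : ℂ) * X (Sum.inr j) ^ 4) from Finset.sum_comm]
  simp only [h1, h3, Finset.sum_const_zero, add_zero, zero_add]
  rw [Finset.sum_mul_sum]
end
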